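/- arXiv:1405.6672 — 2 statements merged into one kernel-verified Lean document; each statement's English description precedes it below -/
import Mathlib

section
/- Both the minimal separation B between code points of optimal codebooks and the minimal optimal-cell mass p_min are strictly positive; that is, B = inf_{c* ∈ M, i ≠ j} ‖c_i* − c_j*‖ > 0 and p_min = inf_{c* ∈ M, 1 ≤ i ≤ k} P(V_i(c*)) > 0. -/
open MeasureTheory Metric
set_option linter.unusedSectionVars false

noncomputable section

variable {H : Type*} [NormedAddCommGroup H] [InnerProductSpace ℝ H] [MeasurableSpace H]

/-- `qgamma k c x = min_j ‖x - c j‖²`. -/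
def qgamma (k : ℕ) (c : Fin k → H) (x : H) : ℝ := ⨅ j : Fin k, ‖x - c j‖ ^ 2

/-- distortion (risk) of a codebook. -/
def qrisk (k : ℕ) (P : Measure H) (c : Fin k → H) : ℝ := ∫ x, qgamma k c x ∂P

/-- the set of optimal codebooks in `B(0,M)^k`. -/
def qopt (k : ℕ) (P : Measure H) (M : ℝ) : Set (Fin k → H) :=
  {c | (∀ i, ‖c i‖ ≤ M) ∧
    ∀ c' : Fin k → H, (∀ i, ‖c' i‖ ≤ M) → qrisk k P c ≤ qrisk k P c'}

/-- the `i`-th (closed) Voronoi cell of the codebook `c`. -/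
def vcell (k : ℕ) (c : Fin k → H) (i : Fin k) : Set H :=
  {x | ∀ j : Fin k, ‖x - c i‖ ≤ ‖x - c j‖}

/-- `B`, the minimal separation between code points of optimal codebooks. -/
def qB (k : ℕ) (P : Measure H) (M : ℝ) : ℝ :=
  sInf {b | ∃ c ∈ qopt k P M, ∃ i j : Fin k, i ≠ j ∧ b = ‖c i - c j‖}

/-- `p_min`, the minimal mass of a Voronoi cell of an optimal codebook. -/
def qpmin (k : ℕ) (P : Measure H) (M : ℝ) : ℝ :=
  sInf {p | ∃ c ∈ qopt k P M, ∃ i : Fin k, p = (P (vcell k c i)).toReal}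

/-- `P` is `M`-bounded: its support is contained in the closed ball `B(0,M)`. -/
def mbounded (P : Measure H) (M : ℝ) : Prop := P (closedBall (0 : H) M)ᶜ = 0

/-- the support of `P` contains more than `k` points. -/
def suppGT (P : Measure H) (k : ℕ) : Prop :=
  ∀ S : Finset H, S.card ≤ k → P ((S : Set H)ᶜ) ≠ 0

lemma qgamma_nonneg (k : ℕ) (c : Fin k → H) (x : H) : 0 ≤ qgamma k c x := by
  rcases isEmpty_or_nonempty (Fin k) with h | h
  · simp [qgamma, iInf_of_empty, Real.sInf_empty]
  · exact le_ciInf fun j => sq_nonneg _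

lemma qgamma_le (k : ℕ) (c : Fin k → H) (x : H) (j : Fin k) :
    qgamma k c x ≤ ‖x - c j‖ ^ 2 :=
  ciInf_le ⟨0, by rintro y ⟨m, rfl⟩; exact sq_nonneg _⟩ j

lemma qgamma_exists (k : ℕ) (hk : 0 < k) (c : Fin k → H) (x : H) :
    ∃ j, qgamma k c x = ‖x - c j‖ ^ 2 := by
  haveI : Nonempty (Fin k) := ⟨⟨0, hk⟩⟩
  obtain ⟨j, hj⟩ := exists_eq_ciInf_of_finite (f := fun j : Fin k => ‖x - c j‖ ^ 2)
  exact ⟨j, hj.symm⟩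

lemma qgamma_mono {k : ℕ} (hk : 0 < k) {c c' : Fin k → H}
    (h : ∀ m, ∃ m', c' m' = c m) (x : H) : qgamma k c' x ≤ qgamma k c x := by
  obtain ⟨j, hj⟩ := qgamma_exists k hk c x
  obtain ⟨m', hm'⟩ := h j
  rw [hj, ← hm']
  exact qgamma_le k c' x m'

lemma le_qgamma {k : ℕ} (hk : 0 < k) {c : Fin k → H} {x : H} {a : ℝ}
    (h : ∀ j, a ≤ ‖x - c j‖ ^ 2) : a ≤ qgamma k c x := by
  haveI : Nonempty (Fin k) := ⟨⟨0, hk⟩⟩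
  exact le_ciInf h

lemma qgamma_continuous (k : ℕ) (hk : 0 < k) (c : Fin k → H) :
    Continuous (qgamma k c) := by
  haveI : Nonempty (Fin k) := ⟨⟨0, hk⟩⟩
  have heq : qgamma k c = fun x =>
      (Finset.univ.inf' Finset.univ_nonempty fun j : Fin k => ‖x - c j‖ ^ 2) := by
    funext x
    apply le_antisymm
    · obtain ⟨j, _, hj⟩ := Finset.exists_mem_eq_inf' (Finset.univ_nonempty (α := Fin k))
        (fun j : Fin k => ‖x - c j‖ ^ 2)
      rw [hj]; exact qgamma_le k c x j
    · exact le_ciInf fun j => Finset.inf'_le _ (Finset.mem_univ j)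
  rw [heq]
  exact Continuous.finset_inf'_apply _ fun i _ =>
    ((continuous_id.sub continuous_const).norm.pow 2)

lemma ae_norm_le (P : Measure H) (M : ℝ) (hbd : mbounded P M) :
    ∀ᵐ x ∂P, ‖x‖ ≤ M := by
  rw [MeasureTheory.ae_iff]
  have : {x : H | ¬ ‖x‖ ≤ M} = (closedBall (0 : H) M)ᶜ := by
    ext x; simp [mem_closedBall_zero_iff]
  rw [this]; exact hbd

lemma qgamma_integrable [BorelSpace H] (k : ℕ) (hk : 0 < k) (P : Measure H)
    [IsProbabilityMeasure P] (M : ℝ) (hbd : mbounded P M)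
    (c : Fin k → H) (hc : ∀ i, ‖c i‖ ≤ M) :
    Integrable (qgamma k c) P := by
  refine Integrable.mono' (integrable_const ((2 * M) ^ 2))
    ((qgamma_continuous k hk c).aestronglyMeasurable) ?_
  filter_upwards [ae_norm_le P M hbd] with x hx
  rw [Real.norm_of_nonneg (qgamma_nonneg k c x)]
  calc qgamma k c x ≤ ‖x - c ⟨0, hk⟩‖ ^ 2 := qgamma_le k c x ⟨0, hk⟩
    _ ≤ (2 * M) ^ 2 := by
        have h1 : ‖x - c ⟨0, hk⟩‖ ≤ 2 * M := by
          have := norm_sub_le x (c ⟨0, hk⟩)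
          have := hc ⟨0, hk⟩
          linarith
        have h0 : (0:ℝ) ≤ ‖x - c ⟨0, hk⟩‖ := norm_nonneg _
        nlinarith

lemma exists_support_points [BorelSpace H] [SecondCountableTopology H]
    (P : Measure H) [IsProbabilityMeasure P] (k : ℕ) (M : ℝ)
    (hbd : mbounded P M) (hsupp : suppGT P k) :
    ∃ y : Fin k → H, Function.Injective y ∧ (∀ t, ‖y t‖ ≤ M) ∧
      ∀ t, ∀ ε > 0, P (ball (y t) ε) ≠ 0 := by
  classical
  set S : Set H := {x | ∀ ε > 0, P (ball x ε) ≠ 0} with hS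
  -- P Sᶜ = 0
  have hx' : ∀ x : ↥Sᶜ, ∃ ε, 0 < ε ∧ P (ball (x : H) ε) = 0 := by
    rintro ⟨x, hx⟩
    simp only [hS, Set.mem_compl_iff, Set.mem_setOf_eq, not_forall] at hx
    obtain ⟨ε, hε, h⟩ := hx
    exact ⟨ε, hε, not_not.mp h⟩
  choose ε hε hball using hx'
  have hSc : P Sᶜ = 0 := by
    obtain ⟨T, hTc, hT⟩ := TopologicalSpace.isOpen_iUnion_countable
      (fun i : ↥Sᶜ => ball (i : H) (ε i)) (fun i => isOpen_ball)
    have hcover : Sᶜ ⊆ ⋃ i ∈ T, ball (i : H) (ε i) := by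
      rw [hT]
      exact fun x hx => Set.mem_iUnion.mpr ⟨⟨x, hx⟩, mem_ball_self (hε ⟨x, hx⟩)⟩
    exact measure_mono_null hcover ((measure_biUnion_null_iff hTc).mpr fun i _ => hball i)
  -- S ⊆ closedBall 0 M
  have hSM : S ⊆ closedBall (0 : H) M := by
    intro x hx
    by_contra hxM
    rw [mem_closedBall_zero_iff, not_le] at hxM
    refine hx (‖x‖ - M) (by linarith) (measure_mono_null ?_ hbd)
    intro y hy
    simp only [mem_ball, Set.mem_compl_iff, mem_closedBall_zero_iff, not_le] at hy ⊢
    have := norm_sub_norm_le y x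
    rw [dist_eq_norm] at hy
    have : ‖y - x‖ < ‖x‖ - M := hy
    have := norm_sub_norm_le x y
    rw [norm_sub_rev] at this
    linarith
  -- k distinct points of S
  have hT : ∀ m : ℕ, m ≤ k → ∃ T : Finset H, T.card = m ∧ ↑T ⊆ S := by
    intro m
    induction m with
    | zero => exact fun _ => ⟨∅, by simp⟩
    | succ n ih =>
      intro hn
      obtain ⟨T, hcard, hTS⟩ := ih (by omega)
      have : ¬ S ⊆ ↑T := by
        intro hsub
        refine hsupp T (by omega) (measure_mono_null ?_ hSc)
        exact Set.compl_subset_compl.mpr hsub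
      obtain ⟨x, hxS, hxT⟩ := Set.not_subset.mp this
      refine ⟨insert x T, ?_, ?_⟩
      · rw [Finset.card_insert_of_notMem (by simpa using hxT), hcard]
      · intro z hz
        rcases Finset.mem_insert.mp (by exact_mod_cast hz) with rfl | hzT
        · exact hxS
        · exact hTS hzT
  obtain ⟨T, hcard, hTS⟩ := hT k le_rfl
  let e := T.equivFinOfCardEq hcard
  refine ⟨fun t => (e.symm t : H), ?_, ?_, ?_⟩
  · intro a b hab
    apply e.symm.injective
    exact Subtype.ext hab
  · intro t
    exact mem_closedBall_zero_iff.mp (hSM (hTS (e.symm t).2))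
  · intro t ε' hε'
    exact hTS (e.symm t).2 ε' hε'

/-- Key lemma: any admissible codebook with a duplicated point can be improved
by a fixed amount `η > 0`. -/
lemma key_improve [BorelSpace H] [SecondCountableTopology H]
    (k : ℕ) (hk : 2 ≤ k) (P : Measure H) [IsProbabilityMeasure P]
    (M : ℝ) (hM : 0 < M) (hbd : mbounded P M) (hsupp : suppGT P k) :
    ∃ η > (0:ℝ), ∀ c : Fin k → H, (∀ i, ‖c i‖ ≤ M) →
      (∃ i j : Fin k, i ≠ j ∧ c i = c j) →
      ∃ c'' : Fin k → H, (∀ i, ‖c'' i‖ ≤ M) ∧ qrisk k P c'' + η ≤ qrisk k P c := by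
  classical
  have hk0 : 0 < k := by omega
  haveI : Nonempty (Fin k) := ⟨⟨0, hk0⟩⟩
  obtain ⟨y, hyinj, hyM, hypos⟩ := exists_support_points P k M hbd hsupp
  -- separation radius
  set D : Finset (Fin k × Fin k) := Finset.univ.filter (fun p => p.1 ≠ p.2) with hD
  have hDne : D.Nonempty := by
    refine ⟨(⟨0, hk0⟩, ⟨1, by omega⟩), ?_⟩
    simp [hD, Fin.ext_iff]
  set r : ℝ := D.inf' hDne (fun p => ‖y p.1 - y p.2‖) / 7 with hr
  have hrpos : 0 < r := by
    apply div_pos _ (by norm_num)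
    rw [Finset.lt_inf'_iff]
    rintro ⟨s, t⟩ hst
    simp only [hD, Finset.mem_filter] at hst
    rw [norm_pos_iff, sub_ne_zero]
    exact fun h => hst.2 (hyinj h)
  have hsep : ∀ s t : Fin k, s ≠ t → 7 * r ≤ ‖y s - y t‖ := by
    intro s t hst
    have : D.inf' hDne (fun p => ‖y p.1 - y p.2‖) ≤ ‖y s - y t‖ :=
      Finset.inf'_le _ (show (s,t) ∈ D by
        simp only [hD, Finset.mem_filter]; exact ⟨Finset.mem_univ _, hst⟩)
    rw [hr]; linarith
  -- mass lower bound
  set pm : ℝ := Finset.univ.inf' Finset.univ_nonempty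
    (fun t : Fin k => (P (ball (y t) r)).toReal) with hpm
  have hpmpos : 0 < pm := by
    rw [hpm, Finset.lt_inf'_iff]
    intro t _
    exact ENNReal.toReal_pos (hypos t r hrpos) (measure_ne_top P _)
  have hpmle : ∀ t : Fin k, pm ≤ (P (ball (y t) r)).toReal := fun t =>
    Finset.inf'_le _ (Finset.mem_univ t)
  refine ⟨3 * r ^ 2 * pm, by positivity, ?_⟩
  rintro c hc ⟨i0, j0, hij, hdup⟩
  -- find an index t with all codepoints far from y t
  have hfar : ∃ t : Fin k, ∀ m : Fin k, 3 * r ≤ ‖c m - y t‖ := by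
    by_contra hcon
    push_neg at hcon
    choose m hm using hcon
    -- t ↦ c (m t) is injective…
    have hinj : Function.Injective (fun t => c (m t)) := by
      intro t1 t2 h12
      by_contra hne
      have h7 := hsep t1 t2 hne
      have e1 := hm t1
      have e2 := hm t2
      simp only at h12
      have hkey : ‖y t1 - y t2‖ ≤ ‖c (m t1) - y t1‖ + ‖c (m t2) - y t2‖ := by
        calc ‖y t1 - y t2‖ = ‖(y t1 - c (m t1)) - (y t2 - c (m t2))‖ := by
              rw [h12]; congr 1; abel
          _ ≤ ‖y t1 - c (m t1)‖ + ‖y t2 - c (m t2)‖ := norm_sub_le _ _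
          _ = ‖c (m t1) - y t1‖ + ‖c (m t2) - y t2‖ := by
              rw [norm_sub_rev, norm_sub_rev (y t2)]
      linarith
    -- …but c takes at most k-1 values
    have himg : (Finset.univ.image fun t => c (m t)) ⊆ (Finset.univ.erase j0).image c := by
      intro x hx
      simp only [Finset.mem_image] at hx ⊢
      obtain ⟨t, _, rfl⟩ := hx
      by_cases hmj : m t = j0
      · exact ⟨i0, Finset.mem_erase.mpr ⟨hij, Finset.mem_univ _⟩, by rw [hmj, ← hdup]⟩
      · exact ⟨m t, Finset.mem_erase.mpr ⟨hmj, Finset.mem_univ _⟩, rfl⟩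
    have h1 : (Finset.univ.image fun t => c (m t)).card = k := by
      rw [Finset.card_image_of_injective _ hinj, Finset.card_univ, Fintype.card_fin]
    have h2 : ((Finset.univ.erase j0).image c).card ≤ k - 1 := by
      calc _ ≤ (Finset.univ.erase j0).card := Finset.card_image_le
        _ = k - 1 := by rw [Finset.card_erase_of_mem (Finset.mem_univ _), Finset.card_univ,
            Fintype.card_fin]
    have := Finset.card_le_card himg
    omega
  obtain ⟨t, ht⟩ := hfar
  set c'' : Fin k → H := Function.update c j0 (y t) with hc''
  have hc''M : ∀ i, ‖c'' i‖ ≤ M := by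
    intro i
    rw [hc'']
    by_cases h : i = j0
    · rw [h, Function.update_self]; exact hyM t
    · rw [Function.update_of_ne h]; exact hc i
  refine ⟨c'', hc''M, ?_⟩
  -- pointwise comparisons
  have hle : ∀ x, qgamma k c'' x ≤ qgamma k c x := by
    intro x
    refine qgamma_mono hk0 (fun mm => ?_) x
    by_cases h : mm = j0
    · exact ⟨i0, by rw [hc'', Function.update_of_ne hij, h, hdup]⟩
    · exact ⟨mm, by rw [hc'', Function.update_of_ne h]⟩
  have hgain : ∀ x ∈ ball (y t) r, qgamma k c'' x + 3 * r ^ 2 ≤ qgamma k c x := by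
    intro x hx
    rw [mem_ball, dist_eq_norm] at hx
    have h1 : qgamma k c'' x ≤ r ^ 2 := by
      calc qgamma k c'' x ≤ ‖x - c'' j0‖ ^ 2 := qgamma_le k c'' x j0
        _ = ‖x - y t‖ ^ 2 := by rw [hc'', Function.update_self]
        _ ≤ r ^ 2 := by
            have h0 : (0:ℝ) ≤ ‖x - y t‖ := norm_nonneg _
            nlinarith [le_of_lt hx]
    have h2 : (2 * r) ^ 2 ≤ qgamma k c x := by
      refine le_qgamma hk0 (fun j => ?_)
      have := ht j
      have h3 : 2 * r ≤ ‖x - c j‖ := by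
        have : ‖c j - y t‖ ≤ ‖c j - x‖ + ‖x - y t‖ := norm_sub_le_norm_sub_add_norm_sub _ _ _
        rw [norm_sub_rev] at this
        have hxy : ‖x - y t‖ < r := hx
        have : ‖c j - y t‖ ≤ ‖x - c j‖ + ‖x - y t‖ := by
          calc ‖c j - y t‖ = ‖(c j - x) + (x - y t)‖ := by abel_nf
            _ ≤ ‖c j - x‖ + ‖x - y t‖ := norm_add_le _ _
            _ = ‖x - c j‖ + ‖x - y t‖ := by rw [norm_sub_rev]
        linarith [ht j]
      nlinarith [norm_nonneg (x - c j), hrpos]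
    nlinarith
  -- integrate
  have hint := qgamma_integrable k hk0 P M hbd c hc
  have hint'' := qgamma_integrable k hk0 P M hbd c'' hc''M
  have hindint : Integrable ((ball (y t) r).indicator fun _ => 3 * r ^ 2) P :=
    (integrable_const (3 * r ^ 2)).indicator measurableSet_ball
  have hptwise : ∀ x, qgamma k c'' x + (ball (y t) r).indicator (fun _ => 3 * r ^ 2) x
      ≤ qgamma k c x := by
    intro x
    by_cases hx : x ∈ ball (y t) r
    · rw [Set.indicator_of_mem hx]
      exact hgain x hx
    · rw [Set.indicator_of_notMem hx, add_zero]
      exact hle x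
  have hstep : qrisk k P c'' + 3 * r ^ 2 * (P (ball (y t) r)).toReal ≤ qrisk k P c := by
    have h := integral_mono (hint''.add hindint) hint hptwise
    simp only [Pi.add_apply] at h
    rw [integral_add hint'' hindint, integral_indicator_const _ measurableSet_ball,
      smul_eq_mul, measureReal_def] at h
    simp only [qrisk]
    linarith
  have : 3 * r ^ 2 * pm ≤ 3 * r ^ 2 * (P (ball (y t) r)).toReal :=
    mul_le_mul_of_nonneg_left (hpmle t) (by positivity)
  linarith

/-- Proposition 2.1: both `B` and `p_min` are positive. -/
theorem stmt0 [BorelSpace H] [SecondCountableTopology H] [CompleteSpace H]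
    (k : ℕ) (hk : 2 ≤ k) (P : Measure H) [IsProbabilityMeasure P]
    (M : ℝ) (hM : 0 < M) (hbd : mbounded P M) (hsupp : suppGT P k)
    (hne : (qopt k P M).Nonempty) :
    0 < qB k P M ∧ 0 < qpmin k P M := by
  classical
  have hk0 : 0 < k := by omega
  set z0 : Fin k := ⟨0, by omega⟩
  set z1 : Fin k := ⟨1, by omega⟩
  have hz01 : z0 ≠ z1 := by simp [z0, z1, Fin.ext_iff]
  obtain ⟨η, hη, himp⟩ := key_improve k hk P M hM hbd hsupp
  obtain ⟨copt, hcopt⟩ := hne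
  constructor
  · -- qB positive
    have hlow : ∀ b ∈ {b | ∃ c ∈ qopt k P M, ∃ i j : Fin k, i ≠ j ∧ b = ‖c i - c j‖},
        η / (6 * M) ≤ b := by
      rintro b ⟨c, hcq, i, j, hij, rfl⟩
      set δ : ℝ := ‖c i - c j‖ with hδ
      have hδ0 : 0 ≤ δ := norm_nonneg _
      have hδ2M : δ ≤ 2 * M := by
        have := norm_sub_le (c i) (c j)
        have h1 := hcq.1 i
        have h2 := hcq.1 j
        linarith
      set c' : Fin k → H := Function.update c j (c i) with hc'
      have hc'M : ∀ m, ‖c' m‖ ≤ M := by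
        intro m
        by_cases h : m = j
        · rw [hc', h, Function.update_self]; exact hcq.1 i
        · rw [hc', Function.update_of_ne h]; exact hcq.1 m
      have hdup : ∃ i' j' : Fin k, i' ≠ j' ∧ c' i' = c' j' := by
        refine ⟨i, j, hij, ?_⟩
        rw [hc', Function.update_of_ne hij, Function.update_self]
      -- pointwise bound a.e.
      have hptw : ∀ᵐ x ∂P, qgamma k c' x ≤ qgamma k c x + (4 * M * δ + δ ^ 2) := by
        filter_upwards [ae_norm_le P M hbd] with x hx
        obtain ⟨m, hm⟩ := qgamma_exists k hk0 c x
        by_cases hmj : m = j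
        · have h1 : qgamma k c' x ≤ ‖x - c i‖ ^ 2 := by
            have := qgamma_le k c' x j
            rwa [hc', Function.update_self] at this
          have h2 : ‖x - c i‖ ≤ ‖x - c j‖ + δ := by
            calc ‖x - c i‖ = ‖(x - c j) - (c i - c j)‖ := by congr 1; abel
              _ ≤ ‖x - c j‖ + ‖c i - c j‖ := norm_sub_le _ _
          have h3 : ‖x - c j‖ ≤ 2 * M := by
            have := norm_sub_le x (c j)
            have := hcq.1 j
            linarith
          have h4 : qgamma k c x = ‖x - c j‖ ^ 2 := by rw [hm, hmj]
          have h0 : (0:ℝ) ≤ ‖x - c j‖ := norm_nonneg _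
          have h0' : (0:ℝ) ≤ ‖x - c i‖ := norm_nonneg _
          nlinarith
        · have h1 : qgamma k c' x ≤ ‖x - c m‖ ^ 2 := by
            have := qgamma_le k c' x m
            rwa [hc', Function.update_of_ne hmj] at this
          nlinarith [hm]
      have hint := qgamma_integrable k hk0 P M hbd c hcq.1
      have hint' := qgamma_integrable k hk0 P M hbd c' hc'M
      have hrisk : qrisk k P c' ≤ qrisk k P c + (4 * M * δ + δ ^ 2) := by
        have h := integral_mono_ae hint'
          (hint.add (integrable_const (4 * M * δ + δ ^ 2))) hptw
        simp only [Pi.add_apply] at h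
        rw [integral_add hint (integrable_const _), integral_const, probReal_univ,
          one_smul] at h
        exact h
      obtain ⟨c'', hc''M, hc''⟩ := himp c' hc'M hdup
      have hoptle : qrisk k P c ≤ qrisk k P c'' := hcq.2 c'' hc''M
      have hfin : η ≤ 4 * M * δ + δ ^ 2 := by linarith
      have : η ≤ 6 * M * δ := by nlinarith
      rw [div_le_iff₀ (by positivity)]
      linarith
    have hne' : {b | ∃ c ∈ qopt k P M, ∃ i j : Fin k, i ≠ j ∧ b = ‖c i - c j‖}.Nonempty :=
      ⟨‖copt z0 - copt z1‖, copt, hcopt, z0, z1, hz01, rfl⟩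
    calc (0:ℝ) < η / (6 * M) := by positivity
      _ ≤ qB k P M := le_csInf hne' hlow
  · -- qpmin positive
    have hlow : ∀ p ∈ {p | ∃ c ∈ qopt k P M, ∃ i : Fin k, p = (P (vcell k c i)).toReal},
        η / (4 * M ^ 2) ≤ p := by
      rintro p ⟨c, hcq, i, rfl⟩
      set j : Fin k := if i = z0 then z1 else z0 with hj
      have hji : j ≠ i := by
        rw [hj]
        by_cases h : i = z0
        · rw [if_pos h, h]; exact hz01.symm
        · rw [if_neg h]; exact fun hh => h hh.symm
      set c' : Fin k → H := Function.update c i (c j) with hc'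
      have hc'M : ∀ m, ‖c' m‖ ≤ M := by
        intro m
        by_cases h : m = i
        · rw [hc', h, Function.update_self]; exact hcq.1 j
        · rw [hc', Function.update_of_ne h]; exact hcq.1 m
      have hdup : ∃ i' j' : Fin k, i' ≠ j' ∧ c' i' = c' j' := by
        refine ⟨j, i, hji, ?_⟩
        rw [hc', Function.update_of_ne hji, Function.update_self]
      have hvm : MeasurableSet (vcell k c i) := by
        have : vcell k c i = ⋂ m : Fin k, {x : H | ‖x - c i‖ ≤ ‖x - c m‖} := by
          ext x; simp [vcell, Set.mem_iInter]
        rw [this]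
        exact (isClosed_iInter fun m => isClosed_le
          ((continuous_id.sub continuous_const).norm)
          ((continuous_id.sub continuous_const).norm)).measurableSet
      have hptw : ∀ᵐ x ∂P, qgamma k c' x ≤
          qgamma k c x + (vcell k c i).indicator (fun _ => 4 * M ^ 2) x := by
        filter_upwards [ae_norm_le P M hbd] with x hx
        by_cases hxv : x ∈ vcell k c i
        · rw [Set.indicator_of_mem hxv]
          have h1 : qgamma k c' x ≤ ‖x - c j‖ ^ 2 := by
            have := qgamma_le k c' x i
            rwa [hc', Function.update_self] at this
          have h2 : ‖x - c j‖ ≤ 2 * M := by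
            have := norm_sub_le x (c j)
            have := hcq.1 j
            linarith
          have h0 : (0:ℝ) ≤ ‖x - c j‖ := norm_nonneg _
          have := qgamma_nonneg k c x
          nlinarith
        · rw [Set.indicator_of_notMem hxv, add_zero]
          simp only [vcell, Set.mem_setOf_eq, not_forall, not_le] at hxv
          obtain ⟨m0, hm0⟩ := hxv
          obtain ⟨m, hm⟩ := qgamma_exists k hk0 c x
          by_cases hmi : m = i
          · exfalso
            have := qgamma_le k c x m0
            rw [hm, hmi] at this
            have h0 : (0:ℝ) ≤ ‖x - c m0‖ := norm_nonneg _
            have h0' : (0:ℝ) ≤ ‖x - c i‖ := norm_nonneg _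
            nlinarith
          · have h1 : qgamma k c' x ≤ ‖x - c m‖ ^ 2 := by
              have := qgamma_le k c' x m
              rwa [hc', Function.update_of_ne hmi] at this
            rw [hm]; exact h1
      have hint := qgamma_integrable k hk0 P M hbd c hcq.1
      have hint' := qgamma_integrable k hk0 P M hbd c' hc'M
      have hindint : Integrable ((vcell k c i).indicator fun _ => 4 * M ^ 2) P :=
        (integrable_const (4 * M ^ 2)).indicator hvm
      have hrisk : qrisk k P c' ≤ qrisk k P c + (P (vcell k c i)).toReal * (4 * M ^ 2) := by
        have h := integral_mono_ae hint' (hint.add hindint) hptw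
        simp only [Pi.add_apply] at h
        rw [integral_add hint hindint, integral_indicator_const _ hvm, smul_eq_mul, measureReal_def] at h
        exact h
      obtain ⟨c'', hc''M, hc''⟩ := himp c' hc'M hdup
      have hoptle : qrisk k P c ≤ qrisk k P c'' := hcq.2 c'' hc''M
      have hfin : η ≤ (P (vcell k c i)).toReal * (4 * M ^ 2) := by linarith
      rw [div_le_iff₀ (by positivity)]
      linarith
    have hne' : {p | ∃ c ∈ qopt k P M, ∃ i : Fin k, p = (P (vcell k c i)).toReal}.Nonempty :=
      ⟨_, copt, hcopt, z0, rfl⟩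
    calc (0:ℝ) < η / (4 * M ^ 2) := by positivity
      _ ≤ qpmin k P M := le_csInf hne' hlow

end
end

section
/- For any σ, σ' ∈ {−1,+1}^m with Σ_i σ_i = Σ_i σ'_i = 0, the distortions of the quantizers Q_σ, Q_{σ'} under the source P_σ satisfy R(Q_{σ'}, P_σ) = R(Q_σ, P_σ) + (Δ² δ / (8m)) ρ(σ, σ'), where ρ(σ,σ') = Σ_{i=1}^m |σ_i − σ'_i|. -/
open MeasureTheory Metric
open scoped Classical

noncomputable section

/-- normalization constant of the cone-shaped density of radius `ρ` on `ℝ^d`. -/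
def coneNorm (d : ℕ) (ρ : ℝ) : ℝ :=
  ∫ y : EuclideanSpace ℝ (Fin d), max (ρ - ‖y‖) 0

/-- the density of the distribution `P_σ`: mass `(1+σ_i δ)/(2m)` on each of the
balls `U_i = B(z_i,ρ)` and `U'_i = B(z_i+w_i,ρ)`, with cone-shaped profile. -/
def Pdens {m d : ℕ} (z w : Fin m → EuclideanSpace ℝ (Fin d)) (ρ δ : ℝ)
    (σ : Fin m → ℝ) (x : EuclideanSpace ℝ (Fin d)) : ℝ :=
  ∑ i, ((1 + σ i * δ) / (2 * m)) *
    ((max (ρ - ‖x - z i‖) 0 + max (ρ - ‖x - (z i + w i)‖) 0) / coneNorm d ρ)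

/-- the distribution `P_σ`. -/
def Pmeas {m d : ℕ} (z w : Fin m → EuclideanSpace ℝ (Fin d)) (ρ δ : ℝ)
    (σ : Fin m → ℝ) : Measure (EuclideanSpace ℝ (Fin d)) :=
  MeasureTheory.volume.withDensity (fun x => ENNReal.ofReal (Pdens z w ρ δ σ x))

/-- the quantizer `Q_σ`: on `U_i ∪ U'_i` it maps to `z_i + w_i/2` if `σ_i = −1`,
and to `z_i` on `U_i`, `z_i + w_i` on `U'_i`, if `σ_i = +1`. -/
def Qquant {m d : ℕ} (z w : Fin m → EuclideanSpace ℝ (Fin d)) (ρ : ℝ)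
    (σ : Fin m → ℝ) (x : EuclideanSpace ℝ (Fin d)) : EuclideanSpace ℝ (Fin d) :=
  if h : ∃ i, x ∈ closedBall (z i) ρ ∨ x ∈ closedBall (z i + w i) ρ then
    (if σ h.choose = -1 then z h.choose + (2 : ℝ)⁻¹ • w h.choose
     else if x ∈ closedBall (z h.choose) ρ then z h.choose
     else z h.choose + w h.choose)
  else 0

/-- the distortion of a quantizer `Q` under the source distribution `P`. -/
def Rquant {d : ℕ} (Q : EuclideanSpace ℝ (Fin d) → EuclideanSpace ℝ (Fin d))
    (P : Measure (EuclideanSpace ℝ (Fin d))) : ℝ :=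
  ∫ x, ‖x - Q x‖ ^ 2 ∂P
variable {d : ℕ}

lemma cone_cont (ρ : ℝ) (c : EuclideanSpace ℝ (Fin d)) :
    Continuous (fun x : EuclideanSpace ℝ (Fin d) => max (ρ - ‖x - c‖) 0) :=
  (continuous_const.sub ((continuous_id.sub continuous_const).norm)).max continuous_const

lemma cone_zero {ρ : ℝ} {c x : EuclideanSpace ℝ (Fin d)} (h : x ∉ closedBall c ρ) :
    max (ρ - ‖x - c‖) 0 = 0 := by
  rw [mem_closedBall, dist_eq_norm, not_le] at h
  exact max_eq_right (by linarith)

lemma mulcone_integrable (ρ : ℝ) (c : EuclideanSpace ℝ (Fin d))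
    {g : EuclideanSpace ℝ (Fin d) → ℝ} (hg : Continuous g) :
    Integrable (fun x : EuclideanSpace ℝ (Fin d) => g x * max (ρ - ‖x - c‖) 0) := by
  apply Continuous.integrable_of_hasCompactSupport (hg.mul (cone_cont ρ c))
  exact HasCompactSupport.intro (isCompact_closedBall c ρ)
    (fun x hx => by rw [Pi.mul_apply, cone_zero hx, mul_zero])

lemma cq_integrable (ρ : ℝ) (q c : EuclideanSpace ℝ (Fin d)) :
    Integrable (fun x : EuclideanSpace ℝ (Fin d) => ‖x - q‖ ^ 2 * max (ρ - ‖x - c‖) 0) :=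
  mulcone_integrable ρ c (((continuous_id.sub continuous_const).norm).pow 2)

lemma coneNorm_pos {ρ : ℝ} (hρ : 0 < ρ) : 0 < coneNorm d ρ := by
  rw [coneNorm]
  have hint : Integrable (fun y : EuclideanSpace ℝ (Fin d) => max (ρ - ‖y‖) 0) := by
    simpa using mulcone_integrable ρ (0 : EuclideanSpace ℝ (Fin d)) continuous_const (g := fun _ => (1:ℝ))
  apply (integral_pos_iff_support_of_nonneg (fun y => le_max_right _ _) hint).mpr
  refine lt_of_lt_of_le (measure_ball_pos volume 0 hρ) (measure_mono ?_)
  intro y hy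
  rw [mem_ball, dist_zero_right] at hy
  exact ne_of_gt (lt_max_of_lt_left (by linarith))

lemma coneNorm_nonneg (ρ : ℝ) : 0 ≤ coneNorm d ρ :=
  integral_nonneg (fun y => le_max_right _ _)

lemma translate_integral (ρ : ℝ) (c q : EuclideanSpace ℝ (Fin d)) :
    ∫ x : EuclideanSpace ℝ (Fin d), ‖x - q‖ ^ 2 * max (ρ - ‖x - c‖) 0 =
      (∫ y : EuclideanSpace ℝ (Fin d), ‖y‖ ^ 2 * max (ρ - ‖y‖) 0) +
        ‖q - c‖ ^ 2 * coneNorm d ρ := by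
  have hstep : ∫ x : EuclideanSpace ℝ (Fin d), ‖x - q‖ ^ 2 * max (ρ - ‖x - c‖) 0 =
      ∫ y : EuclideanSpace ℝ (Fin d), ‖y - (q - c)‖ ^ 2 * max (ρ - ‖y‖) 0 := by
    rw [← integral_sub_right_eq_self
      (fun y : EuclideanSpace ℝ (Fin d) => ‖y - (q - c)‖ ^ 2 * max (ρ - ‖y‖) 0) c]
    congr 1
    funext x
    rw [show x - c - (q - c) = x - q by abel, show ‖x - c‖ = ‖x - c‖ from rfl]
  rw [hstep]
  set v := q - c with hv
  have i1 : Integrable (fun y : EuclideanSpace ℝ (Fin d) => ‖y‖ ^ 2 * max (ρ - ‖y‖) 0) := by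
    simpa using cq_integrable ρ (0 : EuclideanSpace ℝ (Fin d)) 0
  have i2 : Integrable (fun y : EuclideanSpace ℝ (Fin d) =>
      (2 * (inner ℝ y v : ℝ)) * max (ρ - ‖y‖) 0) := by
    simpa using mulcone_integrable ρ (0 : EuclideanSpace ℝ (Fin d))
      (continuous_const.mul (continuous_id.inner continuous_const))
  have i3 : Integrable (fun y : EuclideanSpace ℝ (Fin d) => ‖v‖ ^ 2 * max (ρ - ‖y‖) 0) := by
    simpa using mulcone_integrable ρ (0 : EuclideanSpace ℝ (Fin d)) continuous_const
      (g := fun _ => ‖v‖ ^ 2)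
  have hzero : ∫ y : EuclideanSpace ℝ (Fin d), (2 * (inner ℝ y v : ℝ)) * max (ρ - ‖y‖) 0 = 0 := by
    have h := integral_neg_eq_self
      (fun y : EuclideanSpace ℝ (Fin d) => (2 * (inner ℝ y v : ℝ)) * max (ρ - ‖y‖) 0) volume
    simp only [inner_neg_left, norm_neg, mul_neg, neg_mul] at h
    rw [integral_neg] at h
    linarith
  calc ∫ y : EuclideanSpace ℝ (Fin d), ‖y - v‖ ^ 2 * max (ρ - ‖y‖) 0
      = ∫ y : EuclideanSpace ℝ (Fin d), (‖y‖ ^ 2 * max (ρ - ‖y‖) 0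
          - (2 * (inner ℝ y v : ℝ)) * max (ρ - ‖y‖) 0 + ‖v‖ ^ 2 * max (ρ - ‖y‖) 0) := by
        congr 1; funext y; rw [norm_sub_sq_real]; ring
    _ = (∫ y : EuclideanSpace ℝ (Fin d), ‖y‖ ^ 2 * max (ρ - ‖y‖) 0)
          - (∫ y : EuclideanSpace ℝ (Fin d), (2 * (inner ℝ y v : ℝ)) * max (ρ - ‖y‖) 0)
          + ∫ y : EuclideanSpace ℝ (Fin d), ‖v‖ ^ 2 * max (ρ - ‖y‖) 0 := by
        have i12 : Integrable (fun y : EuclideanSpace ℝ (Fin d) =>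
            ‖y‖ ^ 2 * max (ρ - ‖y‖) 0 - (2 * (inner ℝ y v : ℝ)) * max (ρ - ‖y‖) 0) := i1.sub i2
        rw [integral_add i12 i3, integral_sub i1 i2]
    _ = (∫ y : EuclideanSpace ℝ (Fin d), ‖y‖ ^ 2 * max (ρ - ‖y‖) 0)
          + ‖v‖ ^ 2 * coneNorm d ρ := by
        rw [hzero, integral_const_mul, coneNorm]; ring

lemma Qeval {m : ℕ} {Δ ρ : ℝ} (hΔ : 0 < Δ) (hρ : ρ = Δ / 16)
    {z w : Fin m → EuclideanSpace ℝ (Fin d)}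
    (hzsep : ∀ i j, i ≠ j → 6 * Δ ≤ dist (z i) (z j))
    (hw : ∀ i, ‖w i‖ = Δ) (τ : Fin m → ℝ) (i : Fin m) (x : EuclideanSpace ℝ (Fin d))
    (hx : x ∈ closedBall (z i) ρ ∨ x ∈ closedBall (z i + w i) ρ) :
    Qquant z w ρ τ x = if τ i = -1 then z i + (2 : ℝ)⁻¹ • w i
      else if x ∈ closedBall (z i) ρ then z i else z i + w i := by
  have hex : ∃ j, x ∈ closedBall (z j) ρ ∨ x ∈ closedBall (z j + w j) ρ := ⟨i, hx⟩
  have hnear : ∀ j, (x ∈ closedBall (z j) ρ ∨ x ∈ closedBall (z j + w j) ρ) →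
      dist x (z j) ≤ ρ + Δ := by
    intro j hj
    rcases hj with hj | hj
    · have := mem_closedBall.mp hj; linarith
    · have h1 := mem_closedBall.mp hj
      have h2 : dist (z j + w j) (z j) = Δ := by
        rw [dist_comm, dist_self_add_right, hw]
      calc dist x (z j) ≤ dist x (z j + w j) + dist (z j + w j) (z j) := dist_triangle _ _ _
        _ ≤ ρ + Δ := by rw [h2]; linarith
  have hchoose : hex.choose = i := by
    by_contra hne
    have h1 := hnear _ hex.choose_spec
    have h2 := hnear i hx
    have h3 := hzsep i hex.choose (Ne.symm hne)
    have h4 : dist (z i) (z hex.choose) ≤ dist (z i) x + dist x (z hex.choose) :=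
      dist_triangle _ _ _
    rw [dist_comm (z i) x] at h4
    have hρ' : ρ ≤ Δ := by rw [hρ]; linarith
    linarith
  rw [Qquant, dif_pos hex, hchoose]

lemma pointA {m : ℕ} {Δ ρ : ℝ} (hΔ : 0 < Δ) (hρ : ρ = Δ / 16)
    {z w : Fin m → EuclideanSpace ℝ (Fin d)}
    (hzsep : ∀ i j, i ≠ j → 6 * Δ ≤ dist (z i) (z j))
    (hw : ∀ i, ‖w i‖ = Δ) (τ : Fin m → ℝ) (i : Fin m) (x : EuclideanSpace ℝ (Fin d)) :
    ‖x - Qquant z w ρ τ x‖ ^ 2 * max (ρ - ‖x - z i‖) 0 =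
      ‖x - (if τ i = -1 then z i + (2 : ℝ)⁻¹ • w i else z i)‖ ^ 2 *
        max (ρ - ‖x - z i‖) 0 := by
  rcases le_or_gt ρ ‖x - z i‖ with h | h
  · rw [max_eq_right (by linarith), mul_zero, mul_zero]
  · have hx : x ∈ closedBall (z i) ρ := by rw [mem_closedBall, dist_eq_norm]; linarith
    rw [Qeval hΔ hρ hzsep hw τ i x (Or.inl hx)]
    by_cases hτ : τ i = -1 <;> simp [hτ, hx]

lemma pointB {m : ℕ} {Δ ρ : ℝ} (hΔ : 0 < Δ) (hρ : ρ = Δ / 16)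
    {z w : Fin m → EuclideanSpace ℝ (Fin d)}
    (hzsep : ∀ i j, i ≠ j → 6 * Δ ≤ dist (z i) (z j))
    (hw : ∀ i, ‖w i‖ = Δ) (τ : Fin m → ℝ) (i : Fin m) (x : EuclideanSpace ℝ (Fin d)) :
    ‖x - Qquant z w ρ τ x‖ ^ 2 * max (ρ - ‖x - (z i + w i)‖) 0 =
      ‖x - (if τ i = -1 then z i + (2 : ℝ)⁻¹ • w i else z i + w i)‖ ^ 2 *
        max (ρ - ‖x - (z i + w i)‖) 0 := by
  rcases le_or_gt ρ ‖x - (z i + w i)‖ with h | h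
  · rw [max_eq_right (by linarith), mul_zero, mul_zero]
  · have hx : x ∈ closedBall (z i + w i) ρ := by rw [mem_closedBall, dist_eq_norm]; linarith
    have hnx : x ∉ closedBall (z i) ρ := by
      rw [mem_closedBall, not_le]
      have h2 : dist (z i) (z i + w i) = Δ := by rw [dist_self_add_right, hw]
      have h3 := dist_triangle (z i) x (z i + w i)
      have hd : dist x (z i + w i) ≤ ρ := mem_closedBall.mp hx
      rw [dist_comm (z i) x] at h3
      rw [hρ] at hd ⊢
      linarith [h2 ▸ h3]
    rw [Qeval hΔ hρ hzsep hw τ i x (Or.inr hx)]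
    by_cases hτ : τ i = -1 <;> simp [hτ, hnx]

lemma Rcalc {m : ℕ} {Δ ρ δ : ℝ} (hΔ : 0 < Δ) (hρ : ρ = Δ / 16)
    (hδ0 : 0 ≤ δ) (hδ1 : δ ≤ 1)
    {z w : Fin m → EuclideanSpace ℝ (Fin d)}
    (hzsep : ∀ i j, i ≠ j → 6 * Δ ≤ dist (z i) (z j))
    (hw : ∀ i, ‖w i‖ = Δ)
    (σ τ : Fin m → ℝ) (hσ : ∀ i, σ i = 1 ∨ σ i = -1) :
    Rquant (Qquant z w ρ τ) (Pmeas z w ρ δ σ) =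
      ∑ i, ((1 + σ i * δ) / (2 * m)) *
        (2 * (∫ y : EuclideanSpace ℝ (Fin d), ‖y‖ ^ 2 * max (ρ - ‖y‖) 0) / coneNorm d ρ +
          (if τ i = -1 then Δ ^ 2 / 2 else 0)) := by
  have hρ0 : 0 < ρ := by rw [hρ]; linarith
  have hN : 0 < coneNorm d ρ := coneNorm_pos hρ0
  have hN0 : coneNorm d ρ ≠ 0 := ne_of_gt hN
  have hpc : Continuous (Pdens z w ρ δ σ) := by
    unfold Pdens
    exact continuous_finset_sum _ fun i _ =>
      continuous_const.mul (((cone_cont ρ (z i)).add (cone_cont ρ (z i + w i))).div_const _)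
  have hpnn : ∀ x, 0 ≤ Pdens z w ρ δ σ x := by
    intro x
    apply Finset.sum_nonneg
    intro i _
    apply mul_nonneg
    · apply div_nonneg _ (by positivity)
      rcases hσ i with h | h <;> rw [h] <;> linarith
    · exact div_nonneg (add_nonneg (le_max_right _ _) (le_max_right _ _)) (le_of_lt hN)
  unfold Rquant Pmeas
  rw [show (fun x : EuclideanSpace ℝ (Fin d) => ENNReal.ofReal (Pdens z w ρ δ σ x)) =
    (fun x : EuclideanSpace ℝ (Fin d) =>
      ((Real.toNNReal (Pdens z w ρ δ σ x) : NNReal) : ENNReal)) from rfl]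
  rw [integral_withDensity_eq_integral_smul (hpc.measurable.real_toNNReal) _]
  have hre : (fun x : EuclideanSpace ℝ (Fin d) =>
      Real.toNNReal (Pdens z w ρ δ σ x) • ‖x - Qquant z w ρ τ x‖ ^ 2) =
      fun x : EuclideanSpace ℝ (Fin d) => ∑ i, ((1 + σ i * δ) / (2 * m)) *
        ((‖x - (if τ i = -1 then z i + (2 : ℝ)⁻¹ • w i else z i)‖ ^ 2 *
            max (ρ - ‖x - z i‖) 0 +
          ‖x - (if τ i = -1 then z i + (2 : ℝ)⁻¹ • w i else z i + w i)‖ ^ 2 *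
            max (ρ - ‖x - (z i + w i)‖) 0) / coneNorm d ρ) := by
    funext x
    rw [NNReal.smul_def, Real.coe_toNNReal _ (hpnn x), smul_eq_mul]
    unfold Pdens
    rw [Finset.sum_mul]
    apply Finset.sum_congr rfl
    intro i _
    calc ((1 + σ i * δ) / (2 * m)) *
          ((max (ρ - ‖x - z i‖) 0 + max (ρ - ‖x - (z i + w i)‖) 0) / coneNorm d ρ) *
          ‖x - Qquant z w ρ τ x‖ ^ 2
        = ((1 + σ i * δ) / (2 * m)) *
          ((‖x - Qquant z w ρ τ x‖ ^ 2 * max (ρ - ‖x - z i‖) 0 +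
            ‖x - Qquant z w ρ τ x‖ ^ 2 * max (ρ - ‖x - (z i + w i)‖) 0) / coneNorm d ρ) := by
          ring
      _ = _ := by
          rw [pointA hΔ hρ hzsep hw τ i x, pointB hΔ hρ hzsep hw τ i x]
  rw [hre]
  have hint : ∀ i : Fin m, Integrable (fun x : EuclideanSpace ℝ (Fin d) =>
      ((1 + σ i * δ) / (2 * (m : ℝ))) *
        ((‖x - (if τ i = -1 then z i + (2 : ℝ)⁻¹ • w i else z i)‖ ^ 2 *
            max (ρ - ‖x - z i‖) 0 +
          ‖x - (if τ i = -1 then z i + (2 : ℝ)⁻¹ • w i else z i + w i)‖ ^ 2 *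
            max (ρ - ‖x - (z i + w i)‖) 0) / coneNorm d ρ)) := fun i =>
    (((cq_integrable ρ _ (z i)).add (cq_integrable ρ _ (z i + w i))).div_const _).const_mul _
  rw [integral_finset_sum _ (fun i _ => hint i)]
  apply Finset.sum_congr rfl
  intro i _
  have hA : Integrable (fun x : EuclideanSpace ℝ (Fin d) =>
      ‖x - (if τ i = -1 then z i + (2 : ℝ)⁻¹ • w i else z i)‖ ^ 2 *
        max (ρ - ‖x - z i‖) 0) := cq_integrable ρ _ (z i)
  have hB : Integrable (fun x : EuclideanSpace ℝ (Fin d) =>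
      ‖x - (if τ i = -1 then z i + (2 : ℝ)⁻¹ • w i else z i + w i)‖ ^ 2 *
        max (ρ - ‖x - (z i + w i)‖) 0) := cq_integrable ρ _ (z i + w i)
  rw [integral_const_mul, integral_div, integral_add hA hB,
    translate_integral, translate_integral]
  set I := ∫ y : EuclideanSpace ℝ (Fin d), ‖y‖ ^ 2 * max (ρ - ‖y‖) 0 with hI
  set N := coneNorm d ρ with hNdef
  by_cases hτ : τ i = -1
  · rw [if_pos hτ, if_pos hτ, if_pos hτ]
    have e1 : z i + (2 : ℝ)⁻¹ • w i - z i = (2 : ℝ)⁻¹ • w i := by abel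
    have e2 : z i + (2 : ℝ)⁻¹ • w i - (z i + w i) = -((2 : ℝ)⁻¹ • w i) := by module
    have e3 : ‖(2 : ℝ)⁻¹‖ = (2 : ℝ)⁻¹ := by
      rw [Real.norm_eq_abs, abs_of_pos]; norm_num
    rw [e1, e2, norm_neg, norm_smul, hw, e3]
    congr 1
    field_simp
    ring
  · rw [if_neg hτ, if_neg hτ, if_neg hτ, sub_self, norm_zero, sub_self, norm_zero]
    congr 1
    field_simp
    ring

/-- Proposition 4.7 (step of the minimax proof): exact expansion of the
distortion `R(Q_{σ'}, P_σ) = R(Q_σ, P_σ) + Δ²δ/(8m) · ρ(σ,σ')`. -/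
theorem stmt15 (d k m : ℕ) (hd : 1 ≤ d) (hk3 : 3 ≤ k) (hdvd : 3 ∣ k)
    (hm : 3 * m = 2 * k)
    (M Δ ρ δ : ℝ) (hM : 0 < M)
    (hΔ : Δ = 5 * M / (32 * (m : ℝ) ^ ((1 : ℝ) / d)))
    (hρ : ρ = Δ / 16) (hδ0 : 0 < δ) (hδ : δ ≤ 1 / 3)
    (z w : Fin m → EuclideanSpace ℝ (Fin d))
    (hz : ∀ i, z i ∈ closedBall (0 : EuclideanSpace ℝ (Fin d)) (M - ρ))
    (hzsep : ∀ i j, i ≠ j → 6 * Δ ≤ dist (z i) (z j))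
    (hw : ∀ i, ‖w i‖ = Δ)
    (hU : ∀ i, closedBall (z i) ρ ⊆ closedBall (0 : EuclideanSpace ℝ (Fin d)) M ∧
      closedBall (z i + w i) ρ ⊆ closedBall (0 : EuclideanSpace ℝ (Fin d)) M)
    (σ σ' : Fin m → ℝ)
    (hσ : ∀ i, σ i = 1 ∨ σ i = -1) (hσ' : ∀ i, σ' i = 1 ∨ σ' i = -1)
    (hσ0 : ∑ i, σ i = 0) (hσ'0 : ∑ i, σ' i = 0) :
    Rquant (Qquant z w ρ σ') (Pmeas z w ρ δ σ) =
      Rquant (Qquant z w ρ σ) (Pmeas z w ρ δ σ) +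
        Δ ^ 2 * δ / (8 * m) * ∑ i, |σ i - σ' i| := by
  have hm0 : 0 < m := by omega
  have hmr : (0 : ℝ) < m := by exact_mod_cast hm0
  have hΔ0 : 0 < Δ := by
    rw [hΔ]
    apply div_pos (by linarith)
    have : (0 : ℝ) < (m : ℝ) ^ ((1 : ℝ) / d) := Real.rpow_pos_of_pos hmr _
    linarith
  have hmne : (m : ℝ) ≠ 0 := ne_of_gt hmr
  rw [Rcalc hΔ0 hρ (le_of_lt hδ0) (by linarith) hzsep hw σ σ' hσ,
      Rcalc hΔ0 hρ (le_of_lt hδ0) (by linarith) hzsep hw σ σ hσ]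
  set A := 2 * (∫ y : EuclideanSpace ℝ (Fin d), ‖y‖ ^ 2 * max (ρ - ‖y‖) 0) / coneNorm d ρ
    with hA
  have key : ∀ i : Fin m,
      (1 + σ i * δ) / (2 * m) * (A + (if σ' i = -1 then Δ ^ 2 / 2 else 0))
      = (1 + σ i * δ) / (2 * m) * (A + (if σ i = -1 then Δ ^ 2 / 2 else 0))
        + Δ ^ 2 / (8 * m) * (σ i - σ' i) + Δ ^ 2 * δ / (8 * m) * |σ i - σ' i| := by
    intro i
    rcases hσ i with h1 | h1 <;> rcases hσ' i with h2 | h2 <;> rw [h1, h2] <;> norm_num <;>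
      field_simp <;> ring
  calc (∑ i, (1 + σ i * δ) / (2 * ↑m) * (A + if σ' i = -1 then Δ ^ 2 / 2 else 0))
      = ∑ i, ((1 + σ i * δ) / (2 * ↑m) * (A + if σ i = -1 then Δ ^ 2 / 2 else 0)
          + Δ ^ 2 / (8 * ↑m) * (σ i - σ' i) + Δ ^ 2 * δ / (8 * ↑m) * |σ i - σ' i|) :=
        Finset.sum_congr rfl fun i _ => key i
    _ = (∑ i, (1 + σ i * δ) / (2 * ↑m) * (A + if σ i = -1 then Δ ^ 2 / 2 else 0))
        + Δ ^ 2 / (8 * ↑m) * (∑ i, (σ i - σ' i))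
        + Δ ^ 2 * δ / (8 * ↑m) * ∑ i, |σ i - σ' i| := by
          rw [Finset.sum_add_distrib, Finset.sum_add_distrib, ← Finset.mul_sum, ← Finset.mul_sum]
    _ = _ := by
          rw [Finset.sum_sub_distrib, hσ0, hσ'0]
          ring

end
end
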